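/- arXiv:math/0703911 — 5 statements merged into one kernel-verified Lean document; each statement's English description precedes it below -/
import Mathlib

section
/- Let E = EuclideanSpace ℝ (Fin 3), let t_f > 0, and let C > 0, b > 0 be real constants. Let D : E × E → ℝ and g : E → E be continuously differentiable (C¹). Let r, v : ℝ → E and m : ℝ → ℝ be continuous on [0,t_f] with m(t) > 0 and v(t) ≠ 0 for all t ∈ [0,t_f], and let u : ℝ → E be any function. Suppose p_r, p_v : ℝ → E and p_m : ℝ → ℝ are differentiable on [0,t_f] and satisfy, for every t ∈ [0,t_f], the adjoint equations: p_r'(t) = (1/m(t))·(⟪p_v(t), v(t)⟫/‖v(t)‖)·∇_r D(r(t),v(t)) + (fderiv ℝ g (r(t)))† (p_v(t)); p_v'(t) = −p_r(t) + (1/m(t))·(⟪p_v(t), v(t)⟫/‖v(t)‖)·∇_v D(r(t),v(t)) + (D(r(t),v(t))/m(t))·p_v(t)/‖v(t)‖ − (D(r(t),v(t))/m(t))·⟪p_v(t),v(t)⟫·v(t)/‖v(t)‖³; p_m'(t) = (1/m(t))·⟪p_v(t), −(D(r(t),v(t))/m(t))·v(t)/‖v(t)‖ + (C/m(t))·u(t)⟫.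 If there exists t₀ ∈ [0,t_f] with p_r(t₀) = 0 and p_v(t₀) = 0, then p_r(t) = 0 and p_v(t) = 0 for every t ∈ [0,t_f], and p_m is constant on [0,t_f]. -/
local notation "E3" => EuclideanSpace ℝ (Fin 3)

open Set

lemma grad_fst_norm_le (D : E3 × E3 → ℝ) (hD : ContDiff ℝ 1 D) (a c : E3) :
    ‖gradient (fun x => D (x, c)) a‖ ≤ ‖fderiv ℝ D (a, c)‖ := by
  have hfd : HasFDerivAt (fun x => D (x, c))
      ((fderiv ℝ D (a, c)).comp (ContinuousLinearMap.inl ℝ E3 E3)) a :=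
    (hD.differentiable one_ne_zero (a, c)).hasFDerivAt.comp a (hasFDerivAt_prodMk_left a c)
  have h1 : gradient (fun x => D (x, c)) a
      = (InnerProductSpace.toDual ℝ E3).symm
          ((fderiv ℝ D (a, c)).comp (ContinuousLinearMap.inl ℝ E3 E3)) := by
    rw [gradient, hfd.fderiv]
  rw [h1, LinearIsometryEquiv.norm_map]
  refine ContinuousLinearMap.opNorm_le_bound _ (norm_nonneg _) fun x => ?_
  simp only [ContinuousLinearMap.comp_apply, ContinuousLinearMap.inl_apply]
  calc ‖(fderiv ℝ D (a, c)) (x, 0)‖ ≤ ‖fderiv ℝ D (a, c)‖ * ‖((x, (0:E3)) : E3 × E3)‖ :=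
        (fderiv ℝ D (a, c)).le_opNorm _
    _ = ‖fderiv ℝ D (a, c)‖ * ‖x‖ := by
        rw [Prod.norm_def]; simp [max_eq_left (norm_nonneg x)]

lemma grad_snd_norm_le (D : E3 × E3 → ℝ) (hD : ContDiff ℝ 1 D) (a c : E3) :
    ‖gradient (fun y => D (a, y)) c‖ ≤ ‖fderiv ℝ D (a, c)‖ := by
  have hfd : HasFDerivAt (fun y => D (a, y))
      ((fderiv ℝ D (a, c)).comp (ContinuousLinearMap.inr ℝ E3 E3)) c :=
    (hD.differentiable one_ne_zero (a, c)).hasFDerivAt.comp c (hasFDerivAt_prodMk_right a c)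
  have h1 : gradient (fun y => D (a, y)) c
      = (InnerProductSpace.toDual ℝ E3).symm
          ((fderiv ℝ D (a, c)).comp (ContinuousLinearMap.inr ℝ E3 E3)) := by
    rw [gradient, hfd.fderiv]
  rw [h1, LinearIsometryEquiv.norm_map]
  refine ContinuousLinearMap.opNorm_le_bound _ (norm_nonneg _) fun x => ?_
  simp only [ContinuousLinearMap.comp_apply, ContinuousLinearMap.inr_apply]
  calc ‖(fderiv ℝ D (a, c)) (0, x)‖ ≤ ‖fderiv ℝ D (a, c)‖ * ‖(((0:E3), x) : E3 × E3)‖ :=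
        (fderiv ℝ D (a, c)).le_opNorm _
    _ = ‖fderiv ℝ D (a, c)‖ * ‖x‖ := by
        rw [Prod.norm_def]; simp [max_eq_right (norm_nonneg x)]

theorem degenerate_extremal_lemma
    (t_f C b : ℝ) (ht_f : 0 < t_f) (hC : 0 < C) (hb : 0 < b)
    (D : E3 × E3 → ℝ) (g : E3 → E3)
    (hD : ContDiff ℝ 1 D) (hg : ContDiff ℝ 1 g)
    (r v : ℝ → E3) (m : ℝ → ℝ)
    (hr : ContinuousOn r (Icc 0 t_f)) (hv : ContinuousOn v (Icc 0 t_f))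
    (hm : ContinuousOn m (Icc 0 t_f))
    (hmpos : ∀ t ∈ Icc (0:ℝ) t_f, 0 < m t)
    (hvne : ∀ t ∈ Icc (0:ℝ) t_f, v t ≠ 0)
    (u : ℝ → E3)
    (p_r p_v : ℝ → E3) (p_m : ℝ → ℝ)
    (hpr : ∀ t ∈ Icc (0:ℝ) t_f, HasDerivAt p_r
      ((1 / m t * ((inner ℝ (p_v t) (v t) : ℝ) / ‖v t‖)) •
          gradient (fun x => D (x, v t)) (r t)
        + (ContinuousLinearMap.adjoint (fderiv ℝ g (r t))) (p_v t)) t)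
    (hpv : ∀ t ∈ Icc (0:ℝ) t_f, HasDerivAt p_v
      (-p_r t
        + (1 / m t * ((inner ℝ (p_v t) (v t) : ℝ) / ‖v t‖)) •
            gradient (fun y => D (r t, y)) (v t)
        + (D (r t, v t) / m t / ‖v t‖) • p_v t
        - (D (r t, v t) / m t * (inner ℝ (p_v t) (v t) : ℝ) / ‖v t‖ ^ 3) • v t) t)
    (hpm : ∀ t ∈ Icc (0:ℝ) t_f, HasDerivAt p_m
      (1 / m t *
        (inner ℝ (p_v t)
          (-(D (r t, v t) / m t / ‖v t‖) • v t + (C / m t) • u t) : ℝ)) t)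
    (t₀ : ℝ) (ht₀ : t₀ ∈ Icc (0:ℝ) t_f)
    (hpr0 : p_r t₀ = 0) (hpv0 : p_v t₀ = 0) :
    (∀ t ∈ Icc (0:ℝ) t_f, p_r t = 0 ∧ p_v t = 0) ∧
      (∀ t ∈ Icc (0:ℝ) t_f, ∀ s ∈ Icc (0:ℝ) t_f, p_m t = p_m s) := by
  have ht0f : (0:ℝ) ≤ t_f := ht_f.le
  have h0mem : (0:ℝ) ∈ Icc (0:ℝ) t_f := ⟨le_rfl, ht0f⟩
  -- the combined state
  set f : ℝ → E3 × E3 := fun t => (p_r t, p_v t) with hf_def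
  set f' : ℝ → E3 × E3 := fun t =>
    (((1 / m t * ((inner ℝ (p_v t) (v t) : ℝ) / ‖v t‖)) •
          gradient (fun x => D (x, v t)) (r t)
        + (ContinuousLinearMap.adjoint (fderiv ℝ g (r t))) (p_v t)),
     (-p_r t
        + (1 / m t * ((inner ℝ (p_v t) (v t) : ℝ) / ‖v t‖)) •
            gradient (fun y => D (r t, y)) (v t)
        + (D (r t, v t) / m t / ‖v t‖) • p_v t
        - (D (r t, v t) / m t * (inner ℝ (p_v t) (v t) : ℝ) / ‖v t‖ ^ 3) • v t)) with hf'_def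
  have hfd : ∀ t ∈ Icc (0:ℝ) t_f, HasDerivAt f (f' t) t :=
    fun t ht => (hpr t ht).prodMk (hpv t ht)
  have hfc : ContinuousOn f (Icc 0 t_f) :=
    fun t ht => ((hfd t ht).continuousAt).continuousWithinAt
  -- bounds for coefficients
  have hK : IsCompact (Icc (0:ℝ) t_f) := isCompact_Icc
  obtain ⟨M₁, hM₁⟩ := hK.exists_bound_of_continuousOn
    (hm.inv₀ (fun t ht => (hmpos t ht).ne'))
  obtain ⟨M₂, hM₂⟩ := hK.exists_bound_of_continuousOn
    (((hD.continuous_fderiv one_ne_zero).comp_continuousOn (hr.prodMk hv)).norm)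
  obtain ⟨M₃, hM₃⟩ := hK.exists_bound_of_continuousOn
    (((hg.continuous_fderiv one_ne_zero).comp_continuousOn hr).norm)
  obtain ⟨M₄, hM₄⟩ := hK.exists_bound_of_continuousOn
    ((hD.continuous.comp_continuousOn (hr.prodMk hv)))
  obtain ⟨M₅, hM₅⟩ := hK.exists_bound_of_continuousOn
    ((hv.norm).inv₀ (fun t ht => (norm_pos_iff.mpr (hvne t ht)).ne'))
  have hM₁0 : 0 ≤ M₁ := le_trans (norm_nonneg _) (hM₁ 0 h0mem)
  have hM₂0 : 0 ≤ M₂ := le_trans (norm_nonneg _) (hM₂ 0 h0mem)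
  have hM₃0 : 0 ≤ M₃ := le_trans (norm_nonneg _) (hM₃ 0 h0mem)
  have hM₄0 : 0 ≤ M₄ := le_trans (norm_nonneg _) (hM₄ 0 h0mem)
  have hM₅0 : 0 ≤ M₅ := le_trans (norm_nonneg _) (hM₅ 0 h0mem)
  set K : ℝ := (M₁ * M₂ + M₃) + (1 + M₁ * M₂ + 2 * (M₄ * M₁ * M₅)) with hKdef
  -- key estimate
  have key : ∀ t ∈ Icc (0:ℝ) t_f, ‖f' t‖ ≤ K * ‖f t‖ := by
    intro t ht
    have hw0 : (0:ℝ) < ‖v t‖ := norm_pos_iff.mpr (hvne t ht)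
    have hm1 : |(m t)⁻¹| ≤ M₁ := hM₁ t ht
    have hD2 : ‖fderiv ℝ D (r t, v t)‖ ≤ M₂ := le_trans (le_abs_self _) (hM₂ t ht)
    have hg3 : ‖fderiv ℝ g (r t)‖ ≤ M₃ := le_trans (le_abs_self _) (hM₃ t ht)
    have hD4 : |D (r t, v t)| ≤ M₄ := hM₄ t ht
    have hv5 : ‖v t‖⁻¹ ≤ M₅ := le_trans (le_abs_self _) (hM₅ t ht)
    have hip : |(inner ℝ (p_v t) (v t) : ℝ)| ≤ ‖p_v t‖ * ‖v t‖ := abs_real_inner_le_norm _ _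
    have hipd : |(inner ℝ (p_v t) (v t) : ℝ) / ‖v t‖| ≤ ‖p_v t‖ := by
      rw [abs_div, abs_of_pos hw0, div_le_iff₀ hw0]
      exact hip
    -- coefficient bound for the gradient terms
    have hc1 : |1 / m t * ((inner ℝ (p_v t) (v t) : ℝ) / ‖v t‖)| ≤ M₁ * ‖p_v t‖ := by
      rw [abs_mul]
      apply mul_le_mul _ hipd (abs_nonneg _) hM₁0
      simpa [one_div] using hm1
    have hDm : |D (r t, v t) / m t| ≤ M₄ * M₁ := by
      rw [div_eq_mul_inv, abs_mul]
      exact mul_le_mul hD4 hm1 (abs_nonneg _) hM₄0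
    -- first component
    have hA : ‖(f' t).1‖ ≤ (M₁ * M₂ + M₃) * ‖p_v t‖ := by
      calc ‖(f' t).1‖ ≤ ‖(1 / m t * ((inner ℝ (p_v t) (v t) : ℝ) / ‖v t‖)) •
              gradient (fun x => D (x, v t)) (r t)‖
            + ‖(ContinuousLinearMap.adjoint (fderiv ℝ g (r t))) (p_v t)‖ := norm_add_le _ _
        _ ≤ (M₁ * ‖p_v t‖) * M₂ + M₃ * ‖p_v t‖ := by
            apply add_le_add
            · rw [norm_smul]
              exact mul_le_mul hc1 (le_trans (grad_fst_norm_le D hD _ _) hD2)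
                (norm_nonneg _) (by positivity)
            · calc ‖(ContinuousLinearMap.adjoint (fderiv ℝ g (r t))) (p_v t)‖
                  ≤ ‖ContinuousLinearMap.adjoint (fderiv ℝ g (r t))‖ * ‖p_v t‖ :=
                    ContinuousLinearMap.le_opNorm _ _
                _ ≤ M₃ * ‖p_v t‖ := by
                    rw [LinearIsometryEquiv.norm_map ContinuousLinearMap.adjoint]
                    exact mul_le_mul_of_nonneg_right hg3 (norm_nonneg _)
        _ = (M₁ * M₂ + M₃) * ‖p_v t‖ := by ring
    -- second component
    have hB : ‖(f' t).2‖ ≤ ‖p_r t‖ + (M₁ * M₂ + 2 * (M₄ * M₁ * M₅)) * ‖p_v t‖ := by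
      have t2 : ‖(1 / m t * ((inner ℝ (p_v t) (v t) : ℝ) / ‖v t‖)) •
          gradient (fun y => D (r t, y)) (v t)‖ ≤ (M₁ * ‖p_v t‖) * M₂ := by
        rw [norm_smul]
        exact mul_le_mul hc1 (le_trans (grad_snd_norm_le D hD _ _) hD2)
          (norm_nonneg _) (by positivity)
      have t3 : ‖(D (r t, v t) / m t / ‖v t‖) • p_v t‖ ≤ (M₄ * M₁ * M₅) * ‖p_v t‖ := by
        rw [norm_smul]
        apply mul_le_mul_of_nonneg_right _ (norm_nonneg _)
        rw [Real.norm_eq_abs, div_eq_mul_inv (D (r t, v t) / m t), abs_mul]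
        exact mul_le_mul hDm (by rwa [abs_of_pos (inv_pos.mpr hw0)])
          (abs_nonneg _) (by positivity)
      have t4 : ‖(D (r t, v t) / m t * (inner ℝ (p_v t) (v t) : ℝ) / ‖v t‖ ^ 3) • v t‖
          ≤ (M₄ * M₁ * M₅) * ‖p_v t‖ := by
        rw [norm_smul]
        have h1 : ‖D (r t, v t) / m t * (inner ℝ (p_v t) (v t) : ℝ) / ‖v t‖ ^ 3‖ * ‖v t‖
            ≤ (M₄ * M₁) * (‖p_v t‖ * ‖v t‖) / ‖v t‖ ^ 3 * ‖v t‖ := by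
          apply mul_le_mul_of_nonneg_right _ (norm_nonneg _)
          rw [Real.norm_eq_abs, abs_div, abs_mul, abs_of_pos (pow_pos hw0 3)]
          gcongr
        refine le_trans h1 ?_
        have h2 : (M₄ * M₁) * (‖p_v t‖ * ‖v t‖) / ‖v t‖ ^ 3 * ‖v t‖
            = (M₄ * M₁ * ‖p_v t‖) * ‖v t‖⁻¹ := by
          field_simp
        rw [h2]
        calc (M₄ * M₁ * ‖p_v t‖) * ‖v t‖⁻¹ ≤ (M₄ * M₁ * ‖p_v t‖) * M₅ :=
              mul_le_mul_of_nonneg_left hv5 (by positivity)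
          _ = (M₄ * M₁ * M₅) * ‖p_v t‖ := by ring
      calc ‖(f' t).2‖
          ≤ ‖-p_r t + (1 / m t * ((inner ℝ (p_v t) (v t) : ℝ) / ‖v t‖)) •
              gradient (fun y => D (r t, y)) (v t)
            + (D (r t, v t) / m t / ‖v t‖) • p_v t‖
            + ‖(D (r t, v t) / m t * (inner ℝ (p_v t) (v t) : ℝ) / ‖v t‖ ^ 3) • v t‖ :=
            norm_sub_le _ _
        _ ≤ (‖-p_r t + (1 / m t * ((inner ℝ (p_v t) (v t) : ℝ) / ‖v t‖)) •
              gradient (fun y => D (r t, y)) (v t)‖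
            + ‖(D (r t, v t) / m t / ‖v t‖) • p_v t‖)
            + ‖(D (r t, v t) / m t * (inner ℝ (p_v t) (v t) : ℝ) / ‖v t‖ ^ 3) • v t‖ := by
            gcongr; exact norm_add_le _ _
        _ ≤ ((‖p_r t‖ + (M₁ * ‖p_v t‖) * M₂) + (M₄ * M₁ * M₅) * ‖p_v t‖)
            + (M₄ * M₁ * M₅) * ‖p_v t‖ := by
            apply add_le_add (add_le_add _ t3) t4
            refine le_trans (norm_add_le _ _) ?_
            rw [norm_neg]
            exact add_le_add_right t2 _
        _ = ‖p_r t‖ + (M₁ * M₂ + 2 * (M₄ * M₁ * M₅)) * ‖p_v t‖ := by ring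
    have hfst : ‖p_r t‖ ≤ ‖f t‖ := norm_fst_le (f t)
    have hsnd : ‖p_v t‖ ≤ ‖f t‖ := norm_snd_le (f t)
    have hsum : ‖f' t‖ ≤ ‖(f' t).1‖ + ‖(f' t).2‖ := by
      rw [Prod.norm_def]
      exact max_le (le_add_of_nonneg_right (norm_nonneg _))
        (le_add_of_nonneg_left (norm_nonneg _))
    have hf0 : (0:ℝ) ≤ ‖f t‖ := norm_nonneg _
    calc ‖f' t‖ ≤ ‖(f' t).1‖ + ‖(f' t).2‖ := hsum
      _ ≤ ((M₁ * M₂ + M₃) * ‖p_v t‖) + (‖p_r t‖ + (M₁ * M₂ + 2 * (M₄ * M₁ * M₅)) * ‖p_v t‖) :=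
          add_le_add hA hB
      _ ≤ ((M₁ * M₂ + M₃) * ‖f t‖) + (‖f t‖ + (M₁ * M₂ + 2 * (M₄ * M₁ * M₅)) * ‖f t‖) := by
          apply add_le_add (mul_le_mul_of_nonneg_left hsnd (by positivity))
          exact add_le_add hfst (mul_le_mul_of_nonneg_left hsnd (by positivity))
      _ = K * ‖f t‖ := by rw [hKdef]; ring
  -- initial vanishing
  have hft₀ : f t₀ = 0 := by
    simp only [hf_def, hpr0, hpv0, Prod.mk_eq_zero, and_self]
  -- Gronwall to the right of t₀
  have right : ∀ x ∈ Icc t₀ t_f, ‖f x‖ ≤ gronwallBound 0 K 0 (x - t₀) := by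
    apply norm_le_gronwallBound_of_norm_deriv_right_le
      (hfc.mono (Icc_subset_Icc_left ht₀.1))
      (fun x hx => (hfd x ⟨le_trans ht₀.1 hx.1, hx.2.le⟩).hasDerivWithinAt)
      (by rw [hft₀, norm_zero])
    intro x hx
    rw [add_zero]
    exact key x ⟨le_trans ht₀.1 hx.1, hx.2.le⟩
  -- Gronwall to the left of t₀ via time reversal
  have memneg : ∀ s ∈ Icc (-t₀) (0:ℝ), -s ∈ Icc (0:ℝ) t_f := by
    intro s hs
    exact ⟨neg_nonneg.2 hs.2, le_trans (neg_le.mp hs.1) ht₀.2⟩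
  have left : ∀ x ∈ Icc (-t₀) (0:ℝ), ‖f (-x)‖ ≤ gronwallBound 0 K 0 (x - (-t₀)) := by
    apply norm_le_gronwallBound_of_norm_deriv_right_le
      (f := fun s => f (-s)) (f' := fun s => (-1 : ℝ) • f' (-s))
      (hfc.comp continuousOn_neg memneg)
      (fun x hx => (((hfd (-x) (memneg x ⟨hx.1, hx.2.le⟩)).scomp x
        (hasDerivAt_neg x)).hasDerivWithinAt))
      (by show ‖f (-(-t₀))‖ ≤ (0:ℝ); rw [neg_neg, hft₀, norm_zero])
    intro x hx
    rw [add_zero, norm_smul, norm_neg, norm_one, one_mul]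
    exact key (-x) (memneg x ⟨hx.1, hx.2.le⟩)
  have hzero : ∀ t ∈ Icc (0:ℝ) t_f, f t = 0 := by
    intro t ht
    rcases le_total t₀ t with h | h
    · have := right t ⟨h, ht.2⟩
      rw [gronwallBound_ε0_δ0] at this
      exact norm_le_zero_iff.mp this
    · have := left (-t) ⟨neg_le_neg h, neg_nonpos.2 ht.1⟩
      rw [gronwallBound_ε0_δ0, neg_neg] at this
      exact norm_le_zero_iff.mp this
  have hprz : ∀ t ∈ Icc (0:ℝ) t_f, p_r t = 0 ∧ p_v t = 0 := by
    intro t ht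
    have := hzero t ht
    rw [hf_def] at this
    exact Prod.mk_eq_zero.mp this
  refine ⟨hprz, ?_⟩
  -- p_m is constant
  have hpm0 : ∀ t ∈ Icc (0:ℝ) t_f, HasDerivAt p_m 0 t := by
    intro t ht
    have h := hpm t ht
    have hv0 : p_v t = 0 := (hprz t ht).2
    rwa [hv0, inner_zero_left, mul_zero] at h
  have hconst : ∀ x ∈ Icc (0:ℝ) t_f, p_m x = p_m 0 :=
    constant_of_has_deriv_right_zero
      (fun t ht => (hpm0 t ht).continuousAt.continuousWithinAt)
      (fun x hx => (hpm0 x ⟨hx.1, hx.2.le⟩).hasDerivWithinAt)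
  intro t ht s hs
  rw [hconst t ht, hconst s hs]
end

section
/- Let E = EuclideanSpace ℝ (Fin 3). Let C > 0, m > 0, b > 0, p_m ∈ ℝ be real numbers and let p_v ∈ E with p_v ≠ 0. Define Φ(w) = (C/m)·⟪p_v, w⟫ − b·p_m·‖w‖ for w ∈ E. If u ∈ E satisfies ‖u‖ ≤ 1 and Φ(u) ≥ Φ(w) for every w ∈ E with ‖w‖ ≤ 1, then there exists α ∈ [0,1] such that u = α • (‖p_v‖⁻¹ • p_v). -/
local notation "E3" => EuclideanSpace ℝ (Fin 3)

theorem maximizer_collinear_pv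
    (C m b p_m : ℝ) (hC : 0 < C) (hm : 0 < m) (hb : 0 < b)
    (p_v : E3) (hpv : p_v ≠ 0)
    (u : E3) (hu : ‖u‖ ≤ 1)
    (hmax : ∀ w : E3, ‖w‖ ≤ 1 →
      C / m * (inner ℝ p_v w : ℝ) - b * p_m * ‖w‖ ≤
        C / m * (inner ℝ p_v u : ℝ) - b * p_m * ‖u‖) :
    ∃ α ∈ Set.Icc (0:ℝ) 1, u = α • (‖p_v‖⁻¹ • p_v) := by
  have hpv' : ‖p_v‖ ≠ 0 := norm_ne_zero_iff.mpr hpv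
  set w : E3 := ‖u‖ • (‖p_v‖⁻¹ • p_v) with hw
  have hnw : ‖w‖ = ‖u‖ := by
    simp [hw, norm_smul, inv_mul_cancel₀ hpv']
  have hinw : (inner ℝ p_v w : ℝ) = ‖u‖ * ‖p_v‖ := by
    rw [hw, real_inner_smul_right, real_inner_smul_right,
      real_inner_self_eq_norm_sq]
    field_simp
  have h1 := hmax w (by rw [hnw]; exact hu)
  rw [hinw, hnw] at h1
  have hpos : 0 < C / m := div_pos hC hm
  have h2 : ‖u‖ * ‖p_v‖ ≤ (inner ℝ p_v u : ℝ) := by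
    nlinarith
  have h3 : (inner ℝ p_v u : ℝ) ≤ ‖p_v‖ * ‖u‖ := real_inner_le_norm p_v u
  have heq : (inner ℝ p_v u : ℝ) = ‖p_v‖ * ‖u‖ := le_antisymm h3 (by linarith)
  have h4 : ‖u‖ • p_v = ‖p_v‖ • u := (inner_eq_norm_mul_iff_real).mp heq
  refine ⟨‖u‖, ⟨norm_nonneg u, hu⟩, ?_⟩
  rw [smul_smul, mul_comm, ← smul_smul, h4, smul_smul,
    inv_mul_cancel₀ hpv', one_smul]
end

section
/- Let E = EuclideanSpace ℝ (Fin 3). Let C > 0, m > 0, b > 0, p_m ∈ ℝ be real numbers and let p_v ∈ E with p_v ≠ 0. Define Φ(w) = (C/m)·⟪p_v, w⟫ − b·p_m·‖w‖ and the switching value Ψ = (C/m)·‖p_v‖ − b·p_m. If Ψ < 0 and u ∈ E satisfies ‖u‖ ≤ 1 and Φ(u) ≥ Φ(w) for every w ∈ E with ‖w‖ ≤ 1, then u = 0. -/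
local notation "E3" => EuclideanSpace ℝ (Fin 3)

theorem maximizer_zero_of_switching_neg
    (C m b p_m : ℝ) (hC : 0 < C) (hm : 0 < m) (hb : 0 < b)
    (p_v : E3) (hpv : p_v ≠ 0)
    (hΨ : C / m * ‖p_v‖ - b * p_m < 0)
    (u : E3) (hu : ‖u‖ ≤ 1)
    (hmax : ∀ w : E3, ‖w‖ ≤ 1 →
      C / m * (inner ℝ p_v w : ℝ) - b * p_m * ‖w‖ ≤
        C / m * (inner ℝ p_v u : ℝ) - b * p_m * ‖u‖) :
    u = 0 := by
  have h0 := hmax 0 (by simp)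
  simp only [inner_zero_right, norm_zero, mul_zero, sub_zero] at h0
  have hcs : (inner ℝ p_v u : ℝ) ≤ ‖p_v‖ * ‖u‖ := real_inner_le_norm p_v u
  have hpos : 0 < C / m := div_pos hC hm
  have hnorm : ‖u‖ = 0 := by nlinarith [norm_nonneg u]
  exact norm_eq_zero.mp hnorm
end

section
/- Let E = EuclideanSpace ℝ (Fin 3). Let C > 0, m > 0, b > 0, p_m ∈ ℝ be real numbers and let p_v ∈ E with p_v ≠ 0. Define Φ(w) = (C/m)·⟪p_v, w⟫ − b·p_m·‖w‖ and the switching value Ψ = (C/m)·‖p_v‖ − b·p_m. If Ψ > 0 and u ∈ E satisfies ‖u‖ ≤ 1 and Φ(u) ≥ Φ(w) for every w ∈ E with ‖w‖ ≤ 1, then u = ‖p_v‖⁻¹ • p_v (in particular ‖u‖ = 1). -/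
local notation "E3" => EuclideanSpace ℝ (Fin 3)

theorem maximizer_full_thrust_of_switching_pos
    (C m b p_m : ℝ) (hC : 0 < C) (hm : 0 < m) (hb : 0 < b)
    (p_v : E3) (hpv : p_v ≠ 0)
    (hΨ : 0 < C / m * ‖p_v‖ - b * p_m)
    (u : E3) (hu : ‖u‖ ≤ 1)
    (hmax : ∀ w : E3, ‖w‖ ≤ 1 →
      C / m * (inner ℝ p_v w : ℝ) - b * p_m * ‖w‖ ≤
        C / m * (inner ℝ p_v u : ℝ) - b * p_m * ‖u‖) :
    u = ‖p_v‖⁻¹ • p_v ∧ ‖u‖ = 1 := by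
  have hpvn : 0 < ‖p_v‖ := norm_pos_iff.mpr hpv
  have hCm : 0 < C / m := div_pos hC hm
  set w₀ : E3 := ‖p_v‖⁻¹ • p_v with hw₀
  have hw₀n : ‖w₀‖ = 1 := by
    rw [hw₀, norm_smul, norm_inv, norm_norm, inv_mul_cancel₀ hpvn.ne']
  have hinner₀ : (inner ℝ p_v w₀ : ℝ) = ‖p_v‖ := by
    rw [hw₀, real_inner_smul_right, real_inner_self_eq_norm_sq]
    field_simp
  have hkey := hmax w₀ (le_of_eq hw₀n)
  rw [hinner₀, hw₀n, mul_one] at hkey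
  -- hkey : C/m * ‖p_v‖ - b * p_m ≤ C/m * ⟪p_v,u⟫ - b * p_m * ‖u‖
  have hcs : (inner ℝ p_v u : ℝ) ≤ ‖p_v‖ * ‖u‖ := real_inner_le_norm p_v u
  have hub : C / m * (inner ℝ p_v u : ℝ) - b * p_m * ‖u‖ ≤
      (C / m * ‖p_v‖ - b * p_m) * ‖u‖ := by
    have : C / m * (inner ℝ p_v u : ℝ) ≤ C / m * (‖p_v‖ * ‖u‖) :=
      mul_le_mul_of_nonneg_left hcs hCm.le
    nlinarith
  have hnu : ‖u‖ = 1 := by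
    have h1 : C / m * ‖p_v‖ - b * p_m ≤ (C / m * ‖p_v‖ - b * p_m) * ‖u‖ :=
      hkey.trans hub
    nlinarith
  rw [hnu, mul_one] at hkey
  have hinnu : (inner ℝ p_v u : ℝ) = ‖p_v‖ * ‖u‖ := by
    rw [hnu, mul_one]
    have : ‖p_v‖ ≤ (inner ℝ p_v u : ℝ) := by nlinarith
    rw [hnu, mul_one] at hcs
    linarith
  have heq : ‖u‖ • p_v = ‖p_v‖ • u := (inner_eq_norm_mul_iff_real).mp hinnu
  rw [hnu, one_smul] at heq
  refine ⟨?_, hnu⟩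
  rw [hw₀]
  nth_rewrite 2 [heq]
  rw [smul_smul, inv_mul_cancel₀ hpvn.ne', one_smul]
end

section
/- Let E = EuclideanSpace ℝ (Fin 3), and let C > 0, b > 0, α ≥ 0 be real numbers. Let D : E × E → ℝ be continuously differentiable, with partial gradients ∇_r D and ∇_v D. Fix a time t ∈ ℝ and suppose r(t), v(t) ∈ E with v(t) ≠ 0, m(t) > 0, p_r(t), p_v(t) ∈ E with p_v(t) ≠ 0, p_m(t) ∈ ℝ, where m, p_v, p_m are functions differentiable at t satisfying at t: m'(t) = −b·‖u(t)‖ with u(t) = α • (‖p_v(t)‖⁻¹ • p_v(t)); p_v'(t) = −p_r(t) + (1/m(t))·(⟪p_v(t),v(t)⟫/‖v(t)‖)·∇_v D(r(t),v(t)) + (D(r(t),v(t))/m(t))·p_v(t)/‖v(t)‖ − (D(r(t),v(t))/m(t))·⟪p_v(t),v(t)⟫·v(t)/‖v(t)‖³; and p_m'(t) = (1/m(t))·⟪p_v(t), −(D(r(t),v(t))/m(t))·v(t)/‖v(t)‖ + (C/m(t))·u(t)⟫. Then the switching function Ψ(s) = (C/m(s))·‖p_v(s)‖ − b·p_m(s)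 is differentiable at t with Ψ'(t) = (b·D(r(t),v(t))/(m(t)²·‖v(t)‖))·⟪p_v(t),v(t)⟫ + (C/(m(t)·‖p_v(t)‖))·( −⟪p_v(t), p_r(t)⟫ + (⟪p_v(t),v(t)⟫/(m(t)·‖v(t)‖))·⟪∇_v D(r(t),v(t)), p_v(t)⟫ + (D(r(t),v(t))/m(t))·‖p_v(t)‖²/‖v(t)‖ − (D(r(t),v(t))/m(t))·⟪p_v(t),v(t)⟫²/‖v(t)‖³ ). In particular, Ψ'(t) does not depend on α. -/
local notation "E3" => EuclideanSpace ℝ (Fin 3)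

lemma hasDerivAt_norm_aux {F : Type*} [NormedAddCommGroup F] [InnerProductSpace ℝ F]
    {f : ℝ → F} {f' : F} {x : ℝ} (hf : HasDerivAt f f' x) (hx : f x ≠ 0) :
    HasDerivAt (fun s => ‖f s‖) ((inner ℝ (f x) f' : ℝ) / ‖f x‖) x := by
  have hsq : HasDerivAt (fun s => ‖f s‖ ^ 2) (2 * (inner ℝ (f x) f' : ℝ)) x := hf.norm_sq
  have hne : ‖f x‖ ^ 2 ≠ 0 := pow_ne_zero _ (norm_ne_zero_iff.mpr hx)
  have h := hsq.sqrt hne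
  have hs : Real.sqrt (‖f x‖ ^ 2) = ‖f x‖ := Real.sqrt_sq (norm_nonneg _)
  have heq : (fun y => Real.sqrt (‖f y‖ ^ 2)) = fun s => ‖f s‖ := by
    funext s; exact Real.sqrt_sq (norm_nonneg _)
  rw [heq, hs] at h
  convert h using 1
  have : ‖f x‖ ≠ 0 := norm_ne_zero_iff.mpr hx
  field_simp

theorem switching_function_deriv_singular
    (C b α : ℝ) (hC : 0 < C) (hb : 0 < b) (hα : 0 ≤ α)
    (D : E3 × E3 → ℝ) (hD : ContDiff ℝ 1 D)
    (t : ℝ) (rt vt prt : E3) (hvt : vt ≠ 0)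
    (m p_m : ℝ → ℝ) (p_v : ℝ → E3)
    (hmt : 0 < m t) (hpvt : p_v t ≠ 0)
    (u : ℝ → E3) (hu : u t = α • (‖p_v t‖⁻¹ • p_v t))
    (hm' : HasDerivAt m (-(b * ‖u t‖)) t)
    (hpv' : HasDerivAt p_v
      (-prt
        + (1 / m t * ((inner ℝ (p_v t) vt : ℝ) / ‖vt‖)) •
            gradient (fun y => D (rt, y)) vt
        + (D (rt, vt) / m t / ‖vt‖) • p_v t
        - (D (rt, vt) / m t * (inner ℝ (p_v t) vt : ℝ) / ‖vt‖ ^ 3) • vt) t)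
    (hpm' : HasDerivAt p_m
      (1 / m t *
        (inner ℝ (p_v t)
          (-(D (rt, vt) / m t / ‖vt‖) • vt + (C / m t) • u t) : ℝ)) t) :
    HasDerivAt (fun s => C / m s * ‖p_v s‖ - b * p_m s)
      (b * D (rt, vt) / (m t ^ 2 * ‖vt‖) * (inner ℝ (p_v t) vt : ℝ)
        + C / (m t * ‖p_v t‖) *
          (-(inner ℝ (p_v t) prt : ℝ)
            + (inner ℝ (p_v t) vt : ℝ) / (m t * ‖vt‖) *
                (inner ℝ (gradient (fun y => D (rt, y)) vt) (p_v t) : ℝ)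
            + D (rt, vt) / m t * ‖p_v t‖ ^ 2 / ‖vt‖
            - D (rt, vt) / m t * (inner ℝ (p_v t) vt : ℝ) ^ 2 / ‖vt‖ ^ 3)) t := by
  have hm0 : m t ≠ 0 := ne_of_gt hmt
  have hvn : ‖vt‖ ≠ 0 := norm_ne_zero_iff.mpr hvt
  have hpn : ‖p_v t‖ ≠ 0 := norm_ne_zero_iff.mpr hpvt
  set g := gradient (fun y => D (rt, y)) vt
  set pv' := -prt + (1 / m t * ((inner ℝ (p_v t) vt : ℝ) / ‖vt‖)) • g
      + (D (rt, vt) / m t / ‖vt‖) • p_v t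
      - (D (rt, vt) / m t * (inner ℝ (p_v t) vt : ℝ) / ‖vt‖ ^ 3) • vt with hpvdef
  have hN : HasDerivAt (fun s => ‖p_v s‖) ((inner ℝ (p_v t) pv' : ℝ) / ‖p_v t‖) t :=
    hasDerivAt_norm_aux hpv' hpvt
  have hfrac : HasDerivAt (fun s => C / m s)
      ((0 * m t - C * (-(b * ‖u t‖))) / m t ^ 2) t :=
    (hasDerivAt_const t C).div hm' hm0
  have hmain := (hfrac.mul hN).sub (hpm'.const_mul b)
  convert hmain using 1
  case e'_4 => rfl
  case e'_5 => rfl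
  case e'_8 => rfl
  -- now an algebraic identity
  have hut : ‖u t‖ = α := by
    rw [hu, norm_smul, norm_smul, norm_inv, norm_norm]
    rw [inv_mul_cancel₀ hpn, mul_one, Real.norm_eq_abs, abs_of_nonneg hα]
  have hpu : (inner ℝ (p_v t) (u t) : ℝ) = α * ‖p_v t‖ := by
    rw [hu, real_inner_smul_right, real_inner_smul_right,
      real_inner_self_eq_norm_sq]
    field_simp
  have hinner : (inner ℝ (p_v t) pv' : ℝ)
      = -(inner ℝ (p_v t) prt : ℝ)
        + (1 / m t * ((inner ℝ (p_v t) vt : ℝ) / ‖vt‖)) * (inner ℝ (p_v t) g : ℝ)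
        + (D (rt, vt) / m t / ‖vt‖) * ‖p_v t‖ ^ 2
        - (D (rt, vt) / m t * (inner ℝ (p_v t) vt : ℝ) / ‖vt‖ ^ 3) * (inner ℝ (p_v t) vt : ℝ) := by
    rw [hpvdef, inner_sub_right, inner_add_right, inner_add_right, inner_neg_right,
      real_inner_smul_right, real_inner_smul_right, real_inner_smul_right,
      real_inner_self_eq_norm_sq]
  have hpmrhs : (inner ℝ (p_v t)
      (-(D (rt, vt) / m t / ‖vt‖) • vt + (C / m t) • u t) : ℝ)
      = -(D (rt, vt) / m t / ‖vt‖) * (inner ℝ (p_v t) vt : ℝ)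
        + (C / m t) * (α * ‖p_v t‖) := by
    rw [inner_add_right, real_inner_smul_right, real_inner_smul_right, hpu]
  rw [hinner, hpmrhs, hut]
  have hg : (inner ℝ g (p_v t) : ℝ) = (inner ℝ (p_v t) g : ℝ) := real_inner_comm _ _
  rw [hg]
  field_simp
  ring
end
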